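/- arXiv:1412.3718 — 3 statements merged into one kernel-verified Lean document; each statement's English description precedes it below -/
import Mathlib

section
/- For every even positive integer n, the Bernoulli number B_n plus the sum of 1/p over all primes p such that (p-1) divides n is an integer (the von Staudt–Clausen Theorem). -/
open Finset Nat fwdDiff

/-- Stirling numbers of the second kind (by recurrence). -/
def vscSt : ℕ → ℕ → ℕ
  | 0, 0 => 1
  | 0, _+1 => 0
  | _+1, 0 => 0
  | n+1, k+1 => (k+1) * vscSt n (k+1) + vscSt n k

lemma vscSt_eq_zero {n k : ℕ} (h : n < k) : vscSt n k = 0 := by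
  induction n generalizing k with
  | zero => match k, h with
    | k+1, _ => rfl
  | succ n ih =>
    match k, h with
    | k+1, h =>
      have h1 : n < k + 1 := by omega
      have h2 : n < k := by omega
      simp [vscSt, ih h1, ih h2]

/-- powers as combination of descending factorials with Stirling coefficients -/
lemma vscSt_spec (n x : ℕ) :
    (x : ℤ) ^ n = ∑ k ∈ range (n + 1), (vscSt n k : ℤ) * (x.descFactorial k : ℤ) := by
  induction n with
  | zero => simp [vscSt]
  | succ n ih =>
    have key : ∀ k : ℕ, (x : ℤ) * (x.descFactorial k : ℤ)
        = (x.descFactorial (k+1) : ℤ) + k * x.descFactorial k := by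
      intro k
      rcases le_or_gt k x with h | h
      · have : x.descFactorial (k+1) = (x - k) * x.descFactorial k := Nat.descFactorial_succ x k
        rw [this]
        push_cast [h]
        ring
      · rw [Nat.descFactorial_eq_zero_iff_lt.2 h, Nat.descFactorial_eq_zero_iff_lt.2 (by omega)]
        simp
    calc (x : ℤ) ^ (n+1) = (x : ℤ) * (x:ℤ)^n := by ring
      _ = ∑ k ∈ range (n + 1), (vscSt n k : ℤ) * ((x.descFactorial (k+1) : ℤ) + k * x.descFactorial k) := by
          rw [ih, Finset.mul_sum]
          exact Finset.sum_congr rfl fun k _ => by rw [← mul_assoc, mul_comm (x:ℤ), mul_assoc, key k]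
      _ = ∑ k ∈ range (n + 1), (vscSt n k : ℤ) * (x.descFactorial (k+1) : ℤ)
          + ∑ k ∈ range (n + 1), (k * vscSt n k : ℤ) * (x.descFactorial k : ℤ) := by
          rw [← Finset.sum_add_distrib]
          exact Finset.sum_congr rfl fun k _ => by push_cast; ring
      _ = ∑ k ∈ range (n + 2), (vscSt (n+1) k : ℤ) * (x.descFactorial k : ℤ) := by
          rw [Finset.sum_range_succ' (fun k => (vscSt (n+1) k : ℤ) * (x.descFactorial k : ℤ)) (n+1)]
          have h0 : (vscSt (n+1) 0 : ℤ) * (x.descFactorial 0 : ℤ) = 0 := by simp [vscSt]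
          rw [h0, add_zero]
          have : ∑ k ∈ range (n + 1), (k * vscSt n k : ℤ) * (x.descFactorial k : ℤ)
              = ∑ k ∈ range (n + 1), ((k+1) * vscSt n (k+1) : ℤ) * (x.descFactorial (k+1) : ℤ) := by
            rw [Finset.sum_range_succ' (fun k => ((k:ℤ) * vscSt n k) * (x.descFactorial k : ℤ)) n,
              Finset.sum_range_succ (fun k => (((k:ℤ)+1) * vscSt n (k+1)) * (x.descFactorial (k+1) : ℤ)) n]
            simp [vscSt_eq_zero (Nat.lt_succ_self n)]
          rw [this, ← Finset.sum_add_distrib]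
          exact Finset.sum_congr rfl fun k _ => by simp [vscSt]; push_cast; ring

lemma vscE (n k : ℕ) (hk : k ≤ n) :
    ∑ j ∈ range (k+1), (-1:ℤ)^j * (k.choose j) * (j:ℤ)^n
      = (-1)^k * (vscSt n k * k ! : ℕ) := by
  have hfun : (fun x : ℕ => (x:ℤ)^n)
      = ∑ m ∈ range (n+1), (vscSt n m * m ! : ℤ) • (fun x : ℕ => (x.choose m : ℤ)) := by
    funext x
    rw [vscSt_spec n x]
    simp only [Finset.sum_apply, Pi.smul_apply, smul_eq_mul]
    refine Finset.sum_congr rfl fun m _ => ?_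
    rw [Nat.descFactorial_eq_factorial_mul_choose]
    push_cast; ring
  have h1 : (Δ_[1])^[k] (fun x : ℕ => (x:ℤ)^n) 0 = (vscSt n k * k ! : ℕ) := by
    rw [hfun, fwdDiff_iter_finset_sum]
    simp only [fwdDiff_iter_const_smul, Finset.sum_apply, Pi.smul_apply, smul_eq_mul,
      fwdDiff_iter_choose_zero]
    rw [Finset.sum_eq_single k]
    · simp
    · intro m _ hm; simp [Ne.symm hm]
    · intro h; exact absurd (Finset.mem_range.2 (by omega)) h
  have h2 := fwdDiff_iter_eq_sum_shift (1 : ℕ) (fun x : ℕ => (x:ℤ)^n) k 0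
  rw [h1] at h2
  have : ∑ j ∈ range (k+1), (-1:ℤ)^j * (k.choose j) * (j:ℤ)^n
      = (-1:ℤ)^k * ∑ j ∈ range (k+1), ((-1 : ℤ) ^ (k - j) * k.choose j) • ((0 + j • 1 : ℕ) : ℤ)^n := by
    rw [Finset.mul_sum]
    refine Finset.sum_congr rfl fun j hj => ?_
    have hj' : j ≤ k := by simpa using Nat.lt_succ_iff.1 (Finset.mem_range.1 hj)
    have he : k + (k - j) = 2*(k-j) + j := by omega
    simp only [smul_eq_mul, zero_add, smul_eq_mul, mul_one]
    rw [← mul_assoc, ← mul_assoc, ← pow_add, he, pow_add, pow_mul]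
    norm_num
  rw [this, ← h2]

lemma vsc_mul_dvd_factorial {a b N : ℕ} (h1 : 0 < a) (h2 : a < b) (h3 : b ≤ N) :
    a * b ∣ N ! := by
  have h' : a ∣ (b-1)! := Nat.dvd_factorial h1 (by omega)
  have hd : a * b ∣ (b-1)! * b := mul_dvd_mul h' dvd_rfl
  have hfac : (b-1)! * b = b ! := by
    rw [mul_comm, Nat.mul_factorial_pred (by omega)]
  rw [hfac] at hd
  exact hd.trans (Nat.factorial_dvd_factorial h3)

lemma vsc_composite_dvd_factorial {m : ℕ} (hm : 2 ≤ m) (hp : ¬ m.Prime) (h4 : m ≠ 4) :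
    m ∣ (m - 1)! := by
  obtain ⟨a, ham, ha2, halt⟩ := Nat.exists_dvd_of_not_prime2 hm hp
  obtain ⟨b, rfl⟩ := ham
  have hb2 : 2 ≤ b := by
    rcases Nat.lt_or_ge b 2 with h | h
    · interval_cases b <;> omega
    · exact h
  rcases Nat.lt_trichotomy a b with h | rfl | h
  · have h5 : 2*b ≤ a*b := Nat.mul_le_mul_right b ha2
    exact vsc_mul_dvd_factorial (by omega) h (by omega)
  · have ha3 : 3 ≤ a := by
      rcases Nat.lt_or_ge a 3 with h | h
      · interval_cases a <;> omega
      · exact h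
    have h5 : 3*a ≤ a*a := Nat.mul_le_mul_right a ha3
    have : a * (2 * a) ∣ (a * a - 1)! :=
      vsc_mul_dvd_factorial (by omega) (by omega) (by omega)
    exact dvd_trans ⟨2, by ring⟩ this
  · have h5 : 2*a ≤ b*a := Nat.mul_le_mul_right a hb2
    have : b * a ∣ (a * b - 1)! :=
      vsc_mul_dvd_factorial (by omega) h (by rw [mul_comm] at h5 ⊢; omega)
    rwa [mul_comm b a] at this

lemma vsc_choose_mod (p : ℕ) (hp : p.Prime) (j : ℕ) (hj : j ≤ p - 1) :
    (((p-1).choose j : ℕ) : ZMod p) = (-1)^j := by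
  induction j with
  | zero => simp
  | succ j ih =>
    have hj' : j ≤ p - 1 := by omega
    have hjp : j + 1 < p := by have := hp.two_le; omega
    have hch : (p-1).choose j + (p-1).choose (j+1) = p.choose (j+1) := by
      have : p - 1 + 1 = p := by have := hp.two_le; omega
      rw [← this, Nat.choose_succ_succ', this]
    have hdvd : (p : ℕ) ∣ p.choose (j+1) := hp.dvd_choose_self (Nat.succ_ne_zero j) hjp
    have h0 : ((p.choose (j+1) : ℕ) : ZMod p) = 0 := (ZMod.natCast_eq_zero_iff _ _).2 hdvd
    have : (((p-1).choose j : ℕ) : ZMod p) + (((p-1).choose (j+1) : ℕ) : ZMod p) = 0 := by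
      rw [← Nat.cast_add, hch, h0]
    rw [ih hj'] at this
    have := eq_neg_of_add_eq_zero_right this
    rw [this]
    ring

lemma vsc_sum_pow_zmod (p n : ℕ) (hp : p.Prime) (hn : 0 < n) :
    ∑ j ∈ Finset.range p, ((j : ZMod p))^n = if (p-1) ∣ n then -1 else 0 := by
  haveI := Fact.mk hp
  have h2 : ∑ j ∈ Finset.range p, ((j : ZMod p))^n = ∑ x : ZMod p, x^n := by
    refine Finset.sum_nbij' (fun j => ((j : ZMod p))) (fun x => x.val) ?_ ?_ ?_ ?_ ?_
    · intro a _; exact Finset.mem_univ _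
    · intro x _; exact Finset.mem_range.2 (ZMod.val_lt x)
    · intro a ha; exact ZMod.val_cast_of_lt (Finset.mem_range.1 ha)
    · intro x _; exact ZMod.natCast_rightInverse x
    · intro a _; rfl
  rw [h2]
  have hφ : (Finset.univ.map ⟨fun x : (ZMod p)ˣ => (x : ZMod p), fun _ _ => Units.ext⟩)
      = Finset.univ \ {0} := by
    ext x
    simp only [Finset.mem_map, Finset.mem_univ, true_and, Finset.mem_sdiff, Finset.mem_singleton,
      Function.Embedding.coeFn_mk]
    constructor
    · rintro ⟨u, rfl⟩; exact u.ne_zero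
    · intro hx; exact ⟨(Ne.isUnit hx).unit, rfl⟩
  have hsplit : ∑ x : ZMod p, x^n
      = ∑ x ∈ Finset.univ \ {0}, x^n + (0 : ZMod p)^n :=
    (Finset.sum_eq_sum_sdiff_singleton_add (Finset.mem_univ 0) _)
  rw [hsplit, zero_pow hn.ne', add_zero, ← hφ, Finset.sum_map]
  have := FiniteField.sum_pow_units (ZMod p) n
  rw [ZMod.card] at this
  rw [← this]
  apply Finset.sum_congr rfl
  intro u _
  rfl

lemma vsc_prime_dvd (p n : ℕ) (hp : p.Prime) (hn : 0 < n) :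
    (p : ℤ) ∣ (∑ j ∈ Finset.range p, (-1:ℤ)^j * ((p-1).choose j) * (j:ℤ)^n)
      + (if (p-1) ∣ n then 1 else 0) := by
  haveI := Fact.mk hp
  rw [← ZMod.intCast_zmod_eq_zero_iff_dvd]
  push_cast
  have h1 : ∀ j ∈ Finset.range p,
      (-1:ZMod p)^j * (((p-1).choose j : ℕ) : ZMod p) * ((j:ℕ) : ZMod p)^n
        = ((j : ZMod p))^n := by
    intro j hj
    rw [vsc_choose_mod p hp j (by have := Finset.mem_range.1 hj; omega)]
    rw [← mul_pow]
    norm_num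
  rw [Finset.sum_congr rfl h1, vsc_sum_pow_zmod p n hp hn]
  split_ifs <;> ring

lemma vsc_hockey (m k : ℕ) : ∑ i ∈ range m, i.choose k = m.choose (k+1) := by
  induction m with
  | zero => simp
  | succ m ih =>
    rw [Finset.sum_range_succ, ih]
    have := Nat.choose_succ_succ m k
    simp only [Nat.succ_eq_add_one] at this
    omega

lemma vsc_newton (n m : ℕ) : ∑ i ∈ range m, (i:ℚ)^n
    = ∑ k ∈ range (n+1), ((vscSt n k * k ! : ℕ) : ℚ) * (m.choose (k+1) : ℚ) := by
  have hz : ∀ i : ℕ, (i:ℚ)^n = ∑ k ∈ range (n+1), ((vscSt n k : ℚ)) * (i.descFactorial k : ℚ) := by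
    intro i
    have h := congrArg (fun z : ℤ => (z : ℚ)) (vscSt_spec n i)
    push_cast at h
    exact h
  rw [Finset.sum_congr rfl (fun i _ => hz i), Finset.sum_comm]
  refine Finset.sum_congr rfl fun k _ => ?_
  rw [← Finset.mul_sum]
  have hsum : ∑ i ∈ range m, (i.descFactorial k : ℚ) = (k ! : ℚ) * (m.choose (k+1) : ℚ) := by
    have : ∑ i ∈ range m, i.descFactorial k = k ! * m.choose (k+1) := by
      rw [← vsc_hockey m k, Finset.mul_sum]
      exact Finset.sum_congr rfl fun i _ => Nat.descFactorial_eq_factorial_mul_choose i k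
    exact_mod_cast congrArg (fun z : ℕ => (z : ℚ)) this
  rw [hsum]
  push_cast
  ring

section
open Polynomial

lemma vsc_dP_coeff_one (k : ℕ) :
    (descPochhammer ℚ (k+1)).coeff 1 = (-1)^k * (k ! : ℚ) := by
  induction k with
  | zero => simp [descPochhammer_one]
  | succ k ih =>
    rw [descPochhammer_succ_right]
    have hc0 : (descPochhammer ℚ (k+1)).coeff 0 = 0 := by
      rw [Polynomial.coeff_zero_eq_eval_zero]
      exact descPochhammer_ne_zero_eval_zero ℚ (Nat.succ_ne_zero k)
    have hnc : ((k+1 : ℕ) : ℚ[X]) = Polynomial.C ((k+1 : ℕ) : ℚ) := by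
      simp
    rw [mul_sub, hnc, Polynomial.coeff_sub, Polynomial.coeff_mul_X, hc0,
      mul_comm (descPochhammer ℚ (k+1)) (Polynomial.C _), Polynomial.coeff_C_mul, ih,
      Nat.factorial_succ]
    push_cast
    ring

/-- key identity -/
lemma vsc_bernoulli_eq (n : ℕ) :
    _root_.bernoulli n = ∑ k ∈ range (n+1), (-1:ℚ)^k * ((vscSt n k * k ! : ℕ) : ℚ) / (k+1) := by
  set P : ℚ[X] := ∑ i ∈ range (n+1),
      Polynomial.C (_root_.bernoulli i * ((n+1).choose i) / (n+1)) * Polynomial.X^(n+1-i) with hP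
  set Q : ℚ[X] := ∑ k ∈ range (n+1),
      Polynomial.C (((vscSt n k * k ! : ℕ) : ℚ) / ((k+1)! : ℚ)) * descPochhammer ℚ (k+1) with hQ
  have heval : ∀ m : ℕ, P.eval (m:ℚ) = Q.eval (m:ℚ) := by
    intro m
    have hPe : P.eval (m:ℚ) = ∑ i ∈ range m, (i:ℚ)^n := by
      rw [hP, Polynomial.eval_finset_sum, _root_.sum_range_pow m n]
      refine Finset.sum_congr rfl fun i _ => ?_
      simp [div_mul_eq_mul_div]
    have hQe : Q.eval (m:ℚ) = ∑ i ∈ range m, (i:ℚ)^n := by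
      rw [hQ, Polynomial.eval_finset_sum, vsc_newton n m]
      refine Finset.sum_congr rfl fun k _ => ?_
      simp only [Polynomial.eval_mul, Polynomial.eval_C]
      rw [descPochhammer_eval_eq_descFactorial ℚ m (k+1),
        Nat.descFactorial_eq_factorial_mul_choose]
      have hne : ((k+1)! : ℚ) ≠ 0 := by exact_mod_cast (k+1).factorial_ne_zero
      push_cast
      field_simp
    rw [hPe, hQe]
  have hPQ : P = Q := by
    apply Polynomial.eq_of_infinite_eval_eq
    apply Set.Infinite.mono (s := Set.range ((↑) : ℕ → ℚ))
    · rintro x ⟨m, rfl⟩; exact heval m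
    · exact Set.infinite_range_of_injective Nat.cast_injective
  have hPc : P.coeff 1 = _root_.bernoulli n := by
    rw [hP, Polynomial.finset_sum_coeff]
    rw [Finset.sum_eq_single n]
    · simp only [Polynomial.coeff_C_mul, Polynomial.coeff_X_pow]
      rw [Nat.add_sub_cancel_left, if_pos rfl]  -- n+1-n = 1
      rw [Nat.choose_succ_self_right]
      have : ((n:ℚ)+1) ≠ 0 := by positivity
      field_simp
      norm_num
    · intro i hi hne
      simp only [Polynomial.coeff_C_mul, Polynomial.coeff_X_pow]
      rw [if_neg (by have := Finset.mem_range.1 hi; omega), mul_zero]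
    · intro h; exact absurd (Finset.mem_range.2 (by omega)) h
  have hQc : Q.coeff 1 = ∑ k ∈ range (n+1), (-1:ℚ)^k * ((vscSt n k * k ! : ℕ) : ℚ) / (k+1) := by
    rw [hQ, Polynomial.finset_sum_coeff]
    refine Finset.sum_congr rfl fun k _ => ?_
    rw [Polynomial.coeff_C_mul, vsc_dP_coeff_one k]
    have h1 : ((k+1)! : ℚ) = (k+1) * k ! := by
      rw [Nat.factorial_succ]; push_cast; ring
    have h2 : (k ! : ℚ) ≠ 0 := by exact_mod_cast k.factorial_ne_zero
    have h3 : ((k:ℚ)+1) ≠ 0 := by positivity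
    rw [h1]
    field_simp
  rw [← hPc, hPQ, hQc]

end

lemma vsc_term_dvd (n k : ℕ) (hn : 0 < n) (he : Even n) (hk : k ≤ n) :
    ((k:ℤ)+1) ∣ (-1:ℤ)^k * ((vscSt n k * k ! : ℕ) : ℤ)
      + (if (k+1).Prime ∧ k ∣ n then 1 else 0) := by
  have hcast : ((k:ℤ)+1) = ((k+1 : ℕ) : ℤ) := by push_cast; ring
  by_cases hp : (k+1).Prime
  · have h := vsc_prime_dvd (k+1) n hp hn
    simp only [Nat.add_sub_cancel] at h
    rw [vscE n k hk] at h
    rw [hcast]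
    by_cases hd : k ∣ n
    · rw [if_pos ⟨hp, hd⟩]
      rw [if_pos hd] at h
      exact h
    · rw [if_neg (by tauto)]
      rw [if_neg hd] at h
      exact h
  · rw [if_neg (by tauto), add_zero]
    rcases eq_or_ne k 0 with rfl | hk0
    · simp
    rcases eq_or_ne k 3 with rfl | hk3
    · have hE := vscE n 3 hk
      have h4 : ((4:ℕ):ℤ) ∣ ∑ j ∈ Finset.range 4, (-1:ℤ)^j * ((3).choose j) * (j:ℤ)^n := by
        rw [← ZMod.intCast_zmod_eq_zero_iff_dvd]
        push_cast
        have h2 : ((2:ZMod 4))^n = 0 := by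
          obtain ⟨m, rfl⟩ : ∃ m, n = m + 2 := ⟨n - 2, by omega⟩
          rw [pow_add]
          have h22 : (2:ZMod 4)^2 = 0 := by decide
          rw [h22, mul_zero]
        have h3 : ((3:ZMod 4))^n = 1 := by
          have h31 : (3:ZMod 4) = -1 := by decide
          rw [h31, he.neg_one_pow]
        have h0 : ((0:ZMod 4))^n = 0 := zero_pow hn.ne'
        rw [Finset.sum_range_succ, Finset.sum_range_succ, Finset.sum_range_succ,
          Finset.sum_range_succ, Finset.sum_range_zero]
        push_cast
        rw [h2, h3]
        norm_num
        rw [zero_pow hn.ne']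
        decide
      rw [vscE n 3 hk] at h4
      rw [hcast]
      exact_mod_cast h4
    · have hcomp : (k+1) ∣ k ! := by
        have := vsc_composite_dvd_factorial (m := k+1) (by omega) hp (by omega)
        simpa using this
      have hdc : (k+1) ∣ vscSt n k * k ! := hcomp.mul_left _
      have : ((k+1:ℕ):ℤ) ∣ ((vscSt n k * k ! : ℕ) : ℤ) := Int.natCast_dvd_natCast.2 hdc
      rw [hcast]
      exact this.mul_left _

/-- Von Staudt–Clausen: for even positive n, B_n + ∑_{p prime, (p-1) ∣ n} 1/p
is an integer.  (Every such prime p satisfies p ≤ n + 1, so the sum may be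
taken over the finite range below.) -/
theorem von_staudt_clausen (n : ℕ) (hn : 0 < n) (he : Even n) :
    ∃ z : ℤ, bernoulli n +
      ∑ p ∈ (Finset.range (n + 2)).filter (fun p => p.Prime ∧ (p - 1) ∣ n),
        (1 : ℚ) / p = (z : ℚ) := by
  have hps : ∑ p ∈ (Finset.range (n + 2)).filter (fun p => p.Prime ∧ (p - 1) ∣ n), (1 : ℚ) / p
      = ∑ k ∈ Finset.range (n+1), (if (k+1).Prime ∧ k ∣ n then (1:ℚ) else 0) / (k+1) := by
    rw [Finset.sum_filter]
    rw [Finset.sum_range_succ' (fun p => if p.Prime ∧ (p - 1) ∣ n then (1:ℚ)/p else 0) (n+1)]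
    have h0 : (if Nat.Prime 0 ∧ (0 - 1) ∣ n then (1:ℚ)/(0:ℕ) else 0) = 0 := by
      simp [Nat.not_prime_zero]
    rw [h0, add_zero]
    refine Finset.sum_congr rfl fun k _ => ?_
    simp only [Nat.add_sub_cancel]
    split_ifs with h
    · push_cast; ring
    · simp
  have key : ∀ k : ℕ, ∃ z : ℤ, k ≤ n →
      (-1:ℚ)^k * ((vscSt n k * k ! : ℕ) : ℚ) / (k+1)
        + (if (k+1).Prime ∧ k ∣ n then (1:ℚ) else 0) / (k+1) = (z : ℚ) := by
    intro k
    by_cases hk : k ≤ n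
    · obtain ⟨z, hz⟩ := vsc_term_dvd n k hn he hk
      refine ⟨z, fun _ => ?_⟩
      have hne : ((k:ℚ)+1) ≠ 0 := by positivity
      rw [← add_div, div_eq_iff hne]
      have := congrArg (fun x : ℤ => (x : ℚ)) hz
      push_cast [apply_ite (fun x : ℤ => (x : ℚ))] at this
      push_cast
      rw [this]
      ring
    · exact ⟨0, fun h => absurd h hk⟩
  choose f hf using key
  refine ⟨∑ k ∈ Finset.range (n+1), f k, ?_⟩
  rw [vsc_bernoulli_eq n, hps, ← Finset.sum_add_distrib]
  rw [Int.cast_sum]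
  refine Finset.sum_congr rfl fun k hk => ?_
  exact hf k (by have := Finset.mem_range.1 hk; omega)
end

section
/- In a finite directed network with a source s and sink t and nonnegative integer capacities on edges, the maximum value of an s-t flow equals the minimum capacity of an s-t cut (Max-Flow-Min-Cut Theorem). -/
open Finset

variable {V : Type*} [Fintype V] [DecidableEq V]

/-- A feasible s-t flow: capacity constraints and conservation at internal
vertices. -/
def IsFlow (cap f : V → V → ℕ) (s t : V) : Prop :=
  (∀ u v, f u v ≤ cap u v) ∧
  (∀ v, v ≠ s → v ≠ t → ∑ u, f u v = ∑ w, f v w)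

/-- The value of a flow: net flow out of the source. -/
def flowValue (f : V → V → ℕ) (s : V) : ℤ :=
  (∑ w, (f s w : ℤ)) - ∑ u, (f u s : ℤ)

/-- The capacity of the cut (S, Sᶜ). -/
def cutCapacity (cap : V → V → ℕ) (S : Finset V) : ℕ :=
  ∑ u ∈ S, ∑ v ∈ Sᶜ, cap u v

set_option linter.unusedSectionVars false

lemma flowValue_eq_net {cap f : V → V → ℕ} {s t : V} (hf : IsFlow cap f s t)
    {S : Finset V} (hs : s ∈ S) (ht : t ∉ S) :
    flowValue f s = ∑ u ∈ S, ∑ v ∈ Sᶜ, ((f u v : ℤ) - (f v u : ℤ)) := by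
  have h1 : flowValue f s = ∑ v ∈ S, ((∑ w, (f v w : ℤ)) - ∑ u, (f u v : ℤ)) := by
    rw [Finset.sum_eq_single s]
    · rfl
    · intro v hv hvs
      have h := hf.2 v hvs (fun h => ht (h ▸ hv))
      have h' : (∑ u, (f u v : ℤ)) = ∑ w, (f v w : ℤ) := by exact_mod_cast h
      linarith
    · intro h; exact absurd hs h
  rw [h1]
  have h2 : ∀ v, (∑ w, (f v w : ℤ)) = ∑ w ∈ S, (f v w : ℤ) + ∑ w ∈ Sᶜ, (f v w : ℤ) :=
    fun v => (Finset.sum_add_sum_compl S _).symm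
  have h3 : ∀ v, (∑ u, (f u v : ℤ)) = ∑ u ∈ S, (f u v : ℤ) + ∑ u ∈ Sᶜ, (f u v : ℤ) :=
    fun v => (Finset.sum_add_sum_compl S _).symm
  simp only [h2, h3, Finset.sum_sub_distrib, Finset.sum_add_distrib]
  have h4 : (∑ v ∈ S, ∑ w ∈ S, (f v w : ℤ)) = ∑ v ∈ S, ∑ w ∈ S, (f w v : ℤ) :=
    Finset.sum_comm
  rw [h4]
  ring

lemma weak_duality {cap f : V → V → ℕ} {s t : V} (hf : IsFlow cap f s t)
    {S : Finset V} (hs : s ∈ S) (ht : t ∉ S) :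
    flowValue f s ≤ (cutCapacity cap S : ℤ) := by
  rw [flowValue_eq_net hf hs ht, cutCapacity]
  push_cast
  apply Finset.sum_le_sum
  intro u _
  apply Finset.sum_le_sum
  intro v _
  have h1 := hf.1 u v
  have : (f u v : ℤ) ≤ cap u v := by exact_mod_cast h1
  have h2 : (0:ℤ) ≤ f v u := Int.ofNat_nonneg _
  linarith

omit [Fintype V] [DecidableEq V] in
lemma pairs_chain {r : V → V → Prop} :
    ∀ {l : List V} {a : V}, List.Chain r a l → ∀ {u v : V},
      (u, v) ∈ (a :: l).zip l → r u v := by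
  intro l
  induction l with
  | nil => intro a _ u v h; simp at h
  | cons b m ih =>
    intro a hc u v h
    unfold List.Chain at hc
    rw [List.chain_cons] at hc
    rcases List.mem_cons.1 h with h | h
    · simp only [Prod.mk.injEq] at h
      obtain ⟨rfl, rfl⟩ := h
      exact hc.1
    · exact ih hc.2 h

lemma count_fst : ∀ {l : List V} {a v : V}, (a :: l).Nodup →
    (univ.filter fun w => (v, w) ∈ (a :: l).zip l).card
      = if v ∈ (a :: l).dropLast then 1 else 0 := by
  intro l
  induction l with
  | nil => intro a v _; simp
  | cons b m ih =>
    intro a v hnd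
    have hnd' : (b :: m).Nodup := hnd.of_cons
    have ha : a ∉ b :: m := (List.nodup_cons.1 hnd).1
    by_cases hv : v = a
    · have : (univ.filter fun w => (v, w) ∈ ((a :: b :: m).zip (b :: m))) = {b} := by
        ext w
        simp only [mem_filter, mem_univ, true_and, mem_singleton, List.zip_cons_cons,
          List.mem_cons, Prod.mk.injEq]
        constructor
        · rintro (⟨h1, rfl⟩ | h)
          · rfl
          · exact absurd (hv ▸ (List.of_mem_zip h).1) ha
        · rintro rfl; left; exact ⟨hv, rfl⟩
      rw [this]
      simp [hv]
    · have heq : (univ.filter fun w => (v, w) ∈ ((a :: b :: m).zip (b :: m)))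
          = univ.filter fun w => (v, w) ∈ ((b :: m).zip m) := by
        ext w
        simp only [mem_filter, mem_univ, true_and, List.zip_cons_cons, List.mem_cons,
          Prod.mk.injEq]
        constructor
        · rintro (⟨rfl, rfl⟩ | h)
          · exact absurd rfl hv
          · exact h
        · intro h; right; exact h
      rw [heq, ih hnd']
      have : (v ∈ (a :: b :: m).dropLast) ↔ v ∈ (b :: m).dropLast := by
        rw [List.dropLast_cons₂]
        simp [hv]
      simp only [this]

lemma count_snd : ∀ {l : List V} {a v : V}, (a :: l).Nodup →
    (univ.filter fun u => (u, v) ∈ (a :: l).zip l).card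
      = if v ∈ l then 1 else 0 := by
  intro l
  induction l with
  | nil => intro a v _; simp
  | cons b m ih =>
    intro a v hnd
    have hnd' : (b :: m).Nodup := hnd.of_cons
    have hb : b ∉ m := (List.nodup_cons.1 hnd').1
    by_cases hv : v = b
    · have : (univ.filter fun u => (u, v) ∈ ((a :: b :: m).zip (b :: m))) = {a} := by
        ext u
        simp only [mem_filter, mem_univ, true_and, mem_singleton, List.zip_cons_cons,
          List.mem_cons, Prod.mk.injEq]
        constructor
        · rintro (⟨rfl, h2⟩ | h)
          · rfl
          · exact absurd (hv ▸ (List.of_mem_zip h).2) hb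
        · rintro rfl; left; exact ⟨rfl, hv⟩
      rw [this]
      simp [hv]
    · have heq : (univ.filter fun u => (u, v) ∈ ((a :: b :: m).zip (b :: m)))
          = univ.filter fun u => (u, v) ∈ ((b :: m).zip m) := by
        ext u
        simp only [mem_filter, mem_univ, true_and, List.zip_cons_cons, List.mem_cons,
          Prod.mk.injEq]
        constructor
        · rintro (⟨rfl, rfl⟩ | h)
          · exact absurd rfl hv
          · exact h
        · intro h; right; exact h
      rw [heq, ih hnd']
      have : (v ∈ b :: m) ↔ v ∈ m := by simp [hv]
      simp only [this]

omit [Fintype V] in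
lemma no_reverse : ∀ {l : List V} {a : V}, (a :: l).Nodup → ∀ {u v : V},
    (u, v) ∈ (a :: l).zip l → (v, u) ∉ (a :: l).zip l := by
  intro l
  induction l with
  | nil => intro a _ u v h; simp at h
  | cons b m ih =>
    intro a hnd u v h hrev
    have hnd' : (b :: m).Nodup := hnd.of_cons
    have ha : a ∉ b :: m := (List.nodup_cons.1 hnd).1
    simp only [List.zip_cons_cons, List.mem_cons, Prod.mk.injEq] at h hrev
    rcases h with ⟨h1, h2⟩ | h
    · rcases hrev with ⟨h3, h4⟩ | hrev
      · exact ha (by rw [← h2, h3]; exact List.mem_cons_self)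
      · exact ha (by rw [← h1]; exact List.mem_cons.2 (Or.inr (List.of_mem_zip hrev).2))
    · rcases hrev with ⟨h3, h4⟩ | hrev
      · exact ha (by rw [← h3]; exact List.mem_cons.2 (Or.inr (List.of_mem_zip h).2))
      · exact ih hnd' h hrev
lemma dedup_chain {r : V → V → Prop} {t : V} :
    ∀ (n : ℕ) (l : List V) (a : V), l.length ≤ n → a ≠ t →
      List.Chain r a (l ++ [t]) →
      ∃ l', l'.length ≤ l.length ∧ List.Chain r a (l' ++ [t]) ∧
        a ∉ l' ∧ t ∉ l' ∧ l'.Nodup := by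
  intro n
  induction n with
  | zero =>
    intro l a hl hat hc
    rw [List.length_eq_zero_iff.1 (Nat.le_zero.1 hl)] at hc ⊢
    exact ⟨[], le_refl _, hc, by simp, by simp, List.nodup_nil⟩
  | succ n ih =>
    intro l a hl hat hc
    match l with
    | [] => exact ⟨[], le_refl _, hc, by simp, by simp, List.nodup_nil⟩
    | c :: m =>
      unfold List.Chain at hc
      rw [List.cons_append, List.chain_cons] at hc
      obtain ⟨hac, hcm⟩ := hc
      by_cases hct : c = t
      · exact ⟨[], by simp, by rw [List.nil_append]; exact List.IsChain.cons_cons (hct ▸ hac) (.singleton _),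
          by simp, by simp, List.nodup_nil⟩
      · have hmn : m.length ≤ n := by simpa using Nat.succ_le_succ_iff.1 hl
        obtain ⟨m', hlen, hchain, hcm', htm', hnd⟩ := ih m c hmn hct hcm
        by_cases haec : a = c
        · exact ⟨m', by simpa using Nat.le_succ_of_le hlen, haec ▸ hchain,
            haec ▸ hcm', htm', hnd⟩
        · by_cases ham : a ∈ m'
          · obtain ⟨m₁, m₂, rfl⟩ := List.append_of_mem ham
            have hchain2 : List.Chain r a (m₂ ++ [t]) := by
              have : List.Chain r c ((m₁ ++ a :: m₂) ++ [t]) := hchain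
              rw [List.append_assoc, List.cons_append] at this
              exact (List.isChain_cons_split.1 this).2
            have hm2 : m₂.length ≤ n := by
              have h1 : m₂.length < (m₁ ++ a :: m₂).length := by
                simp [List.length_append]; omega
              omega
            obtain ⟨l'', h1, h2, h3, h4, h5⟩ := ih m₂ a hm2 hat hchain2
            refine ⟨l'', ?_, h2, h3, h4, h5⟩
            have : m₂.length ≤ (m₁ ++ a :: m₂).length := by
              simp [List.length_append]; omega
            simp only [List.length_cons]
            omega
          · refine ⟨c :: m', by simpa using hlen, ?_, ?_, ?_, ?_⟩
            · unfold List.Chain; rw [List.cons_append, List.chain_cons]; exact ⟨hac, hchain⟩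
            · simp only [List.mem_cons, not_or]; exact ⟨haec, ham⟩
            · simp only [List.mem_cons, not_or]; exact ⟨fun h => hct h.symm, htm'⟩
            · exact List.nodup_cons.2 ⟨hcm', hnd⟩

lemma exists_simple_path {r : V → V → Prop} {s t : V} (hst : s ≠ t)
    (h : Relation.ReflTransGen r s t) :
    ∃ l : List V, List.Chain r s (l ++ [t]) ∧ (s :: (l ++ [t])).Nodup := by
  obtain ⟨l₀, hc, hlast⟩ := List.exists_isChain_cons_of_relationReflTransGen h
  have hne : l₀ ≠ [] := by
    rintro rfl
    exact hst (by simpa using hlast)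
  have hlast' : l₀.getLast hne = t := by
    rw [List.getLast_cons hne] at hlast
    exact hlast
  have hdecomp : l₀ = l₀.dropLast ++ [t] := by
    conv_lhs => rw [← List.dropLast_append_getLast hne]
    rw [hlast']
  rw [hdecomp] at hc
  obtain ⟨l', _, hchain, hsl, htl, hnd⟩ :=
    dedup_chain l₀.dropLast.length l₀.dropLast s (le_refl _) hst hc
  refine ⟨l', hchain, ?_⟩
  rw [List.nodup_cons]
  constructor
  · simp only [List.mem_append, List.mem_singleton, not_or]
    exact ⟨hsl, hst⟩
  · rw [List.nodup_append]
    refine ⟨hnd, List.nodup_singleton _, ?_⟩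
    intro a ha b hb hab
    rw [List.mem_singleton] at hb
    subst hb hab
    exact htl ha

/-- The augmented flow along a list of path edges `P`. -/
def augFlow (cap f : V → V → ℕ) (P : List (V × V)) (u v : V) : ℕ :=
  f u v + (if (u, v) ∈ P ∧ f u v < cap u v then 1 else 0)
    - (if (v, u) ∈ P ∧ ¬ f v u < cap v u then 1 else 0)

section AugBasic
variable {cap f : V → V → ℕ} {P : List (V × V)}
  (hP : ∀ u v : V, (u, v) ∈ P → (f u v < cap u v ∨ 0 < f v u))
  (hrev : ∀ u v : V, (u, v) ∈ P → (v, u) ∉ P)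

include hP in
lemma augFlow_pos {u v : V} (h : (v, u) ∈ P ∧ ¬ f v u < cap v u) : 0 < f u v := by
  rcases hP v u h.1 with h' | h'
  · exact absurd h' h.2
  · exact h'

include hP hrev in
lemma augFlow_cast (u v : V) :
    (augFlow cap f P u v : ℤ) = (f u v : ℤ)
      + (if (u, v) ∈ P ∧ f u v < cap u v then 1 else 0)
      - (if (v, u) ∈ P ∧ ¬ f v u < cap v u then 1 else 0) := by
  rw [augFlow]
  by_cases h2 : (v, u) ∈ P ∧ ¬ f v u < cap v u
  · have hpos := augFlow_pos hP h2
    have h1 : ¬ ((u, v) ∈ P ∧ f u v < cap u v) := fun hh => hrev _ _ hh.1 h2.1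
    rw [if_neg h1, if_pos h2, if_neg h1, if_pos h2]
    omega
  · rw [if_neg h2, if_neg h2]
    by_cases h1 : (u, v) ∈ P ∧ f u v < cap u v
    · rw [if_pos h1, if_pos h1]; omega
    · rw [if_neg h1, if_neg h1]; omega

include hP in
lemma augFlow_le (hcap : ∀ u v, f u v ≤ cap u v) (u v : V) :
    augFlow cap f P u v ≤ cap u v := by
  rw [augFlow]
  by_cases h1 : (u, v) ∈ P ∧ f u v < cap u v
  · simp only [if_pos h1]
    omega
  · simp only [if_neg h1]
    have := hcap u v
    omega

end AugBasic

lemma augment {cap f : V → V → ℕ} {s t : V} (hst : s ≠ t) (hf : IsFlow cap f s t)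
    (hres : Relation.ReflTransGen (fun u v => f u v < cap u v ∨ 0 < f v u) s t) :
    ∃ f', IsFlow cap f' s t ∧ flowValue f' s = flowValue f s + 1 := by
  obtain ⟨l, hchain, hnd⟩ := exists_simple_path hst hres
  set P : List (V × V) := (s :: (l ++ [t])).zip (l ++ [t]) with hPdef
  have hP : ∀ u v : V, (u, v) ∈ P → (f u v < cap u v ∨ 0 < f v u) :=
    fun u v h => pairs_chain hchain h
  have hrev : ∀ u v : V, (u, v) ∈ P → (v, u) ∉ P := fun u v h => no_reverse hnd h
  have hc := augFlow_cast hP hrev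
  -- counting lemmas
  have hcount1 : ∀ v : V, (∑ w, (if (v, w) ∈ P then (1 : ℤ) else 0))
      = if v ∈ s :: l then 1 else 0 := by
    intro v
    rw [Finset.sum_boole, count_fst hnd]
    have hdl : (s :: (l ++ [t])).dropLast = s :: l := by
      rw [show s :: (l ++ [t]) = (s :: l) ++ [t] from rfl, List.dropLast_concat]
    rw [hdl]
    split_ifs <;> simp
  have hcount2 : ∀ v : V, (∑ u, (if (u, v) ∈ P then (1 : ℤ) else 0))
      = if v ∈ l ++ [t] then 1 else 0 := by
    intro v
    rw [Finset.sum_boole, count_snd hnd]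
    split_ifs <;> simp
  -- pointwise splits
  have hsplitA : ∀ v : V,
      (∑ w, (if (v, w) ∈ P ∧ f v w < cap v w then (1 : ℤ) else 0))
        + (∑ u, (if (v, u) ∈ P ∧ ¬ f v u < cap v u then (1 : ℤ) else 0))
      = if v ∈ s :: l then 1 else 0 := by
    intro v
    rw [← Finset.sum_add_distrib, ← hcount1 v]
    apply Finset.sum_congr rfl
    intro w _
    by_cases h : (v, w) ∈ P <;> by_cases h' : f v w < cap v w <;> simp [h, h']
  have hsplitB : ∀ v : V,
      (∑ u, (if (u, v) ∈ P ∧ f u v < cap u v then (1 : ℤ) else 0))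
        + (∑ w, (if (w, v) ∈ P ∧ ¬ f w v < cap w v then (1 : ℤ) else 0))
      = if v ∈ l ++ [t] then 1 else 0 := by
    intro v
    rw [← Finset.sum_add_distrib, ← hcount2 v]
    apply Finset.sum_congr rfl
    intro u _
    by_cases h : (u, v) ∈ P <;> by_cases h' : f u v < cap u v <;> simp [h, h']
  -- sums of augmented flow
  have hsumIn : ∀ v : V, (∑ u, (augFlow cap f P u v : ℤ))
      = (∑ u, (f u v : ℤ))
        + (∑ u, (if (u, v) ∈ P ∧ f u v < cap u v then (1 : ℤ) else 0))
        - (∑ u, (if (v, u) ∈ P ∧ ¬ f v u < cap v u then (1 : ℤ) else 0)) := by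
    intro v
    simp only [hc, Finset.sum_sub_distrib, Finset.sum_add_distrib]
  have hsumOut : ∀ v : V, (∑ w, (augFlow cap f P v w : ℤ))
      = (∑ w, (f v w : ℤ))
        + (∑ w, (if (v, w) ∈ P ∧ f v w < cap v w then (1 : ℤ) else 0))
        - (∑ w, (if (w, v) ∈ P ∧ ¬ f w v < cap w v then (1 : ℤ) else 0)) := by
    intro v
    simp only [hc, Finset.sum_sub_distrib, Finset.sum_add_distrib]
  refine ⟨augFlow cap f P, ⟨augFlow_le hP hf.1, ?_⟩, ?_⟩
  · -- conservation
    intro v hvs hvt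
    have hZ : (∑ u, (augFlow cap f P u v : ℤ)) = ∑ w, (augFlow cap f P v w : ℤ) := by
      have hcons : (∑ u, (f u v : ℤ)) = ∑ w, (f v w : ℤ) := by
        exact_mod_cast hf.2 v hvs hvt
      have hA := hsplitA v
      have hB := hsplitB v
      have hmem : (if v ∈ s :: l then (1:ℤ) else 0) = if v ∈ l ++ [t] then 1 else 0 := by
        simp [List.mem_cons, List.mem_append, hvs, hvt]
      rw [hsumIn v, hsumOut v]
      rw [hmem] at hA
      linarith
    exact_mod_cast hZ
  · -- value
    rw [flowValue, flowValue, hsumIn s, hsumOut s]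
    have hA := hsplitA s
    have hB := hsplitB s
    have hs1 : (if s ∈ s :: l then (1:ℤ) else 0) = 1 := by simp
    have hs2 : (if s ∈ l ++ [t] then (1:ℤ) else 0) = 0 := by
      have : s ∉ l ++ [t] := (List.nodup_cons.1 hnd).1
      simp [this]
    rw [hs1] at hA
    rw [hs2] at hB
    linarith

/-- Max-Flow-Min-Cut: there is a feasible flow f and an s-t cut S such that
the value of f equals the capacity of S, f has maximum value among all
feasible flows, and S has minimum capacity among all s-t cuts. -/
theorem max_flow_min_cut (cap : V → V → ℕ) (s t : V) (hst : s ≠ t) :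
    ∃ (f : V → V → ℕ) (S : Finset V),
      IsFlow cap f s t ∧ s ∈ S ∧ t ∉ S ∧
      flowValue f s = (cutCapacity cap S : ℤ) ∧
      (∀ f', IsFlow cap f' s t → flowValue f' s ≤ flowValue f s) ∧
      (∀ S' : Finset V, s ∈ S' → t ∉ S' → cutCapacity cap S ≤ cutCapacity cap S') := by
  classical
  -- existence of a maximum flow
  have hbdd : ∀ z ∈ {z : ℤ | ∃ g, IsFlow cap g s t ∧ flowValue g s = z},
      z ≤ (∑ w, (cap s w : ℤ)) := by
    rintro z ⟨g, hg, rfl⟩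
    rw [flowValue]
    have h1 : (∑ w, (g s w : ℤ)) ≤ ∑ w, (cap s w : ℤ) := by
      apply Finset.sum_le_sum
      intro w _
      exact_mod_cast hg.1 s w
    have h2 : (0 : ℤ) ≤ ∑ u, (g u s : ℤ) :=
      Finset.sum_nonneg fun u _ => Int.ofNat_nonneg _
    linarith
  have hne : ∃ z, z ∈ {z : ℤ | ∃ g, IsFlow cap g s t ∧ flowValue g s = z} := by
    refine ⟨0, fun _ _ => 0, ⟨fun u v => Nat.zero_le _, fun v _ _ => rfl⟩, ?_⟩
    simp [flowValue]
  obtain ⟨M, ⟨f, hf, hfM⟩, hmax⟩ :=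
    Int.exists_greatest_of_bdd ⟨_, fun z hz => hbdd z hz⟩ hne
  have hmax' : ∀ f', IsFlow cap f' s t → flowValue f' s ≤ flowValue f s := by
    intro f' hf'
    rw [hfM]
    exact hmax _ ⟨f', hf', rfl⟩
  -- the residual-reachable cut
  set res : V → V → Prop := fun u v => f u v < cap u v ∨ 0 < f v u with hres
  set S : Finset V := univ.filter (fun v => Relation.ReflTransGen res s v) with hS
  have hsS : s ∈ S := by
    rw [hS, mem_filter]
    exact ⟨mem_univ s, Relation.ReflTransGen.refl⟩
  have htS : t ∉ S := by
    intro ht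
    rw [hS, mem_filter] at ht
    obtain ⟨f', hf', hval⟩ := augment hst hf ht.2
    have := hmax' f' hf'
    omega
  -- across the cut, edges are saturated and reverse edges are empty
  have hcross : ∀ u ∈ S, ∀ v ∈ Sᶜ, f u v = cap u v ∧ f v u = 0 := by
    intro u hu v hv
    rw [hS, mem_filter] at hu
    rw [Finset.mem_compl, hS, mem_filter] at hv
    have hnres : ¬ res u v := by
      intro h
      exact hv ⟨mem_univ v, hu.2.tail h⟩
    rw [hres] at hnres
    have h1 : ¬ f u v < cap u v := fun h => hnres (Or.inl h)
    have h2 : ¬ 0 < f v u := fun h => hnres (Or.inr h)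
    exact ⟨le_antisymm (hf.1 u v) (not_lt.1 h1), by omega⟩
  have hval : flowValue f s = (cutCapacity cap S : ℤ) := by
    rw [flowValue_eq_net hf hsS htS, cutCapacity]
    push_cast
    apply Finset.sum_congr rfl
    intro u hu
    apply Finset.sum_congr rfl
    intro v hv
    obtain ⟨h1, h2⟩ := hcross u hu v hv
    rw [h1, h2]
    simp
  refine ⟨f, S, hf, hsS, htS, hval, hmax', ?_⟩
  intro S' hsS' htS'
  have h := weak_duality hf hsS' htS'
  rw [hval] at h
  exact_mod_cast h
end

section
/- For every positive even integer n, the denominator of the Bernoulli number B_n equals the product of all primes p such that (p-1) divides n. -/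
open Finset

section VSC
variable {p : ℕ} [hp : Fact p.Prime]

theorem VSC.norm_den_pos {q : ℚ} : 0 < padicNorm p (q.den : ℚ) := by
  have := padicNorm.nonzero (p := p) (q := (q.den : ℚ)) (by exact_mod_cast q.den_nz)
  exact lt_of_le_of_ne (padicNorm.nonneg _) (Ne.symm this)

theorem VSC.norm_num_div_den (q : ℚ) :
    padicNorm p q = padicNorm p (q.num : ℚ) / padicNorm p (q.den : ℚ) := by
  conv_lhs => rw [← Rat.num_div_den q]
  rw [padicNorm.div]

theorem VSC.not_dvd_num {q : ℚ} (hdvd : p ∣ q.den) : ¬ (p : ℤ) ∣ q.num := by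
  rw [Int.natCast_dvd]
  intro h
  have := Nat.dvd_gcd h hdvd
  rw [q.reduced] at this
  exact hp.out.ne_one (Nat.dvd_one.1 this)

theorem VSC.den_dvd_iff {q : ℚ} : p ∣ q.den ↔ 1 < padicNorm p q := by
  rcases eq_or_ne q 0 with rfl | hq
  · rw [Rat.den_zero, padicNorm.zero, Nat.dvd_one]
    simp only [hp.out.ne_one]
    norm_num
  · constructor
    · intro hdvd
      have h1 : padicNorm p (q.num : ℚ) = 1 :=
        (padicNorm.int_eq_one_iff _).2 (VSC.not_dvd_num hdvd)
      have h2 : padicNorm p (q.den : ℚ) < 1 := (padicNorm.nat_lt_one_iff _).2 hdvd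
      rw [VSC.norm_num_div_den, h1]
      exact (one_lt_div VSC.norm_den_pos).2 h2
    · intro hlt
      by_contra hdvd
      have h2 : padicNorm p (q.den : ℚ) = 1 := (padicNorm.nat_eq_one_iff _).2 hdvd
      rw [VSC.norm_num_div_den, h2, div_one] at hlt
      exact absurd (padicNorm.of_int q.num) (not_le.2 hlt)

theorem VSC.not_sq_dvd_den {q : ℚ} (h : padicNorm p q ≤ p) : ¬ (p * p) ∣ q.den := by
  intro hdvd
  have hp2 := hp.out.two_le
  have hq : q ≠ 0 := by
    rintro rfl
    rw [Rat.den_zero, Nat.dvd_one] at hdvd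
    nlinarith
  have hpd : p ∣ q.den := Dvd.dvd.mul_left dvd_rfl p |>.trans hdvd
  have h1 : padicNorm p (q.num : ℚ) = 1 :=
    (padicNorm.int_eq_one_iff _).2 (VSC.not_dvd_num hpd)
  have hden : padicNorm p (q.den : ℚ) ≤ (p : ℚ) ^ (-(2 : ℤ)) := by
    have := (padicNorm.dvd_iff_norm_le (p := p) (n := 2) (z := (q.den : ℤ))).1
      (by exact_mod_cast (pow_two p ▸ hdvd : p ^ 2 ∣ q.den).natCast)
    simpa using this
  have hp1 : (1 : ℚ) < p := by exact_mod_cast hp.out.one_lt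
  have hkey : (p : ℚ) ^ (2 : ℤ) ≤ padicNorm p q := by
    rw [VSC.norm_num_div_den, h1, le_div_iff₀ VSC.norm_den_pos]
    calc (p:ℚ) ^ (2:ℤ) * padicNorm p (q.den : ℚ) ≤ (p:ℚ)^(2:ℤ) * (p:ℚ)^(-(2:ℤ)) :=
          mul_le_mul_of_nonneg_left hden (by positivity)
      _ = 1 := by rw [← zpow_add₀ (by positivity : (p:ℚ) ≠ 0)]; norm_num
  have h2 : (p : ℚ) ^ (2 : ℤ) ≤ p := hkey.trans h
  rw [zpow_two] at h2
  have h3 : (0:ℚ) < p := lt_trans zero_lt_one hp1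
  exact absurd ((mul_le_iff_le_one_left h3).1 h2) (not_le.2 hp1)

theorem VSC.padicNorm_pow' (x : ℚ) (k : ℕ) : padicNorm p (x ^ k) = padicNorm p x ^ k := by
  induction k with
  | zero => simp [padicNorm.one]
  | succ k ih => rw [pow_succ, pow_succ, padicNorm.mul, ih]

theorem VSC.norm_nat_lb {j c : ℕ} (hj : j ≠ 0) (h : ¬ p ^ c ∣ j) :
    (p : ℚ) ^ (1 - (c : ℤ)) ≤ padicNorm p (j : ℚ) := by
  have hp1 : (1 : ℚ) < p := by exact_mod_cast hp.out.one_lt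
  obtain ⟨z, hz⟩ := padicNorm.values_discrete (p := p) (q := (j : ℚ)) (by exact_mod_cast hj)
  have hnle : ¬ padicNorm p ((j : ℤ) : ℚ) ≤ (p : ℚ) ^ (-(c : ℤ)) := by
    intro hle
    exact h (by exact_mod_cast (padicNorm.dvd_iff_norm_le (p := p)).2 hle)
  push_cast at hnle
  rw [hz] at hnle ⊢
  have : (-(c:ℤ)) < -z := (zpow_lt_zpow_iff_right₀ hp1).1 (not_le.1 hnle)
  exact zpow_le_zpow_right₀ hp1.le (by omega)

omit hp in
theorem VSC.bernoulli_recurrence (p m : ℕ) :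
    (p : ℚ) * bernoulli m = (∑ k ∈ range p, (k : ℚ) ^ m)
      - ∑ i ∈ range m, bernoulli i * ((m + 1).choose i) * (p : ℚ) ^ (m + 1 - i) / (m + 1) := by
  have h := sum_range_pow p m
  rw [Finset.sum_range_succ] at h
  have hlast : bernoulli m * (((m + 1).choose m : ℕ) : ℚ) * (p : ℚ) ^ (m + 1 - m) / ((m:ℚ) + 1)
      = (p : ℚ) * bernoulli m := by
    have h1 : (m + 1).choose m = m + 1 := Nat.choose_succ_self_right m
    have h2 : m + 1 - m = 1 := by omega
    rw [h1, h2, pow_one]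
    have h3 : ((m:ℚ) + 1) ≠ 0 := by positivity
    push_cast
    field_simp
  push_cast at h hlast ⊢
  rw [hlast] at h
  linarith [h]

omit hp in
theorem VSC.term_eq (m i : ℕ) (hi : i < m) :
    bernoulli i * (((m + 1).choose i : ℕ) : ℚ) * (p : ℚ) ^ (m + 1 - i) / ((m : ℚ) + 1)
      = ((m.choose i : ℕ) : ℚ) * ((p : ℚ) * bernoulli i) * (p : ℚ) ^ (m - i)
        / (((m + 1 - i : ℕ) : ℕ) : ℚ) := by
  have hc : ((m.choose i : ℕ) : ℚ) * ((m : ℚ) + 1)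
      = (((m + 1).choose i : ℕ) : ℚ) * (((m + 1 - i : ℕ) : ℕ) : ℚ) := by
    exact_mod_cast congrArg (Nat.cast : ℕ → ℚ) (Nat.choose_mul_succ_eq m i)
  have hpow : (p : ℚ) ^ (m + 1 - i) = (p : ℚ) * (p : ℚ) ^ (m - i) := by
    have : m + 1 - i = (m - i) + 1 := by omega
    rw [this, pow_succ]; ring
  have h1 : ((m : ℚ) + 1) ≠ 0 := by positivity
  have h2 : (((m + 1 - i : ℕ) : ℕ) : ℚ) ≠ 0 := by
    have : 0 < m + 1 - i := by omega
    exact_mod_cast this.ne'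
  rw [hpow]
  field_simp
  linear_combination (-(bernoulli i * (p:ℚ) * (p:ℚ)^(m-i))) * hc

theorem VSC.term_bound {m i : ℕ} (hi : i < m) (hB : padicNorm p ((p:ℚ) * bernoulli i) ≤ 1)
    {c : ℕ} (hc : ¬ p ^ c ∣ (m + 1 - i)) :
    padicNorm p (bernoulli i * (((m + 1).choose i : ℕ) : ℚ) * (p : ℚ) ^ (m + 1 - i)
      / ((m : ℚ) + 1)) ≤ (p : ℚ) ^ ((c : ℤ) - 1 - (m - i : ℕ)) := by
  have hp1 : (1 : ℚ) < p := by exact_mod_cast hp.out.one_lt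
  have hp0 : (0 : ℚ) < p := lt_trans zero_lt_one hp1
  rw [VSC.term_eq m i hi, padicNorm.div, padicNorm.mul, padicNorm.mul, VSC.padicNorm_pow',
    padicNorm.padicNorm_p_of_prime]
  have hnum : padicNorm p ((m.choose i : ℕ) : ℚ) * padicNorm p ((p:ℚ) * bernoulli i)
      * ((p:ℚ)⁻¹) ^ (m - i) ≤ (p : ℚ) ^ (-(m - i : ℕ) : ℤ) := by
    have h1 : padicNorm p ((m.choose i : ℕ) : ℚ) ≤ 1 := padicNorm.of_nat _
    have h3 : ((p:ℚ)⁻¹) ^ (m - i) = (p : ℚ) ^ (-(m - i : ℕ) : ℤ) := by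
      rw [inv_pow, ← zpow_natCast, ← zpow_neg]
    rw [h3]
    calc padicNorm p ((m.choose i : ℕ) : ℚ) * padicNorm p ((p:ℚ) * bernoulli i)
          * (p : ℚ) ^ (-(m - i : ℕ) : ℤ)
        ≤ 1 * 1 * (p : ℚ) ^ (-(m - i : ℕ) : ℤ) := by
          apply mul_le_mul_of_nonneg_right _ (by positivity)
          exact mul_le_mul h1 hB (padicNorm.nonneg _) zero_le_one
      _ = (p : ℚ) ^ (-(m - i : ℕ) : ℤ) := by ring
  have hden : (p : ℚ) ^ (1 - (c : ℤ)) ≤ padicNorm p (((m + 1 - i : ℕ) : ℕ) : ℚ) :=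
    VSC.norm_nat_lb (by omega) hc
  calc padicNorm p ((m.choose i : ℕ) : ℚ) * padicNorm p ((p:ℚ) * bernoulli i)
        * ((p:ℚ)⁻¹) ^ (m - i) / padicNorm p (((m + 1 - i : ℕ) : ℕ) : ℚ)
      ≤ (p : ℚ) ^ (-(m - i : ℕ) : ℤ) / (p : ℚ) ^ (1 - (c : ℤ)) :=
        div_le_div₀ (by positivity) hnum (by positivity) hden
    _ = (p : ℚ) ^ ((c : ℤ) - 1 - (m - i : ℕ)) := by
        rw [← zpow_sub₀ (ne_of_gt hp0)]
        ring_nf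

theorem VSC.aux_two_pow : ∀ k, 2 ≤ k → k + 1 < 2 ^ k := by
  intro k hk
  induction k with
  | zero => omega
  | succ n ih =>
    rcases Nat.lt_or_ge n 2 with h | h
    · interval_cases n <;> simp_all
    · have := ih (by omega)
      rw [pow_succ]
      omega

theorem VSC.aux_three_pow : ∀ k, 1 ≤ k → k + 1 < 3 ^ k := by
  intro k hk
  induction k with
  | zero => omega
  | succ n ih =>
    rcases Nat.lt_or_ge n 1 with h | h
    · interval_cases n <;> norm_num
    · have := ih (by omega)
      rw [pow_succ]
      omega

omit hp in
theorem VSC.aux_pow_gt {p j : ℕ} (hp2 : 2 ≤ p) (hj : 2 ≤ j) (h : ¬(p = 2 ∧ j = 2)) :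
    j < p ^ (j - 1) := by
  rcases Nat.lt_or_ge p 3 with h3 | h3
  · have hpe : p = 2 := by omega
    subst hpe
    have := VSC.aux_two_pow (j - 1) (by omega)
    omega
  · calc j = (j - 1) + 1 := by omega
      _ < 3 ^ (j - 1) := VSC.aux_three_pow _ (by omega)
      _ ≤ p ^ (j - 1) := Nat.pow_le_pow_left h3 _

/-- Key integrality: `p * B_m` is `p`-integral for every `m`. -/
theorem VSC.pB_int : ∀ m : ℕ, padicNorm p ((p : ℚ) * bernoulli m) ≤ 1 := by
  intro m
  induction m using Nat.strong_induction_on with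
  | _ m ih =>
    rw [VSC.bernoulli_recurrence p m]
    refine le_trans padicNorm.sub (max_le ?_ ?_)
    · have : (∑ k ∈ range p, (k : ℚ) ^ m) = ((∑ k ∈ range p, k ^ m : ℕ) : ℚ) := by push_cast; rfl
      rw [this]
      exact padicNorm.of_nat _
    · refine padicNorm.sum_le' (fun i hi => ?_) zero_le_one
      rw [mem_range] at hi
      have hc : ¬ p ^ (m + 1 - i) ∣ (m + 1 - i) := by
        intro hdvd
        have h1 := Nat.le_of_dvd (by omega) hdvd
        have h2 : (m + 1 - i) < p ^ (m + 1 - i) :=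
          Nat.lt_pow_self hp.out.one_lt
        omega
      have := VSC.term_bound (p := p) hi (ih i hi) hc
      have he : ((m + 1 - i : ℕ) : ℤ) - 1 - ((m - i : ℕ) : ℤ) = 0 := by
        push_cast
        omega
      rw [he, zpow_zero] at this
      exact_mod_cast this


theorem VSC.cast_sum_pow (m : ℕ) :
    ((∑ k ∈ range p, k ^ m : ℕ) : ZMod p) = ∑ x : ZMod p, x ^ m := by
  push_cast
  refine Finset.sum_nbij' (fun k => ((k : ZMod p))) (fun x => x.val) ?_ ?_ ?_ ?_ ?_
  · intro a _; exact mem_univ _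
  · intro x _
    rw [mem_range]
    exact ZMod.val_lt x
  · intro a ha
    rw [mem_range] at ha
    exact ZMod.val_cast_of_lt ha
  · intro x _
    exact ZMod.natCast_zmod_val x
  · intro a _
    rfl

theorem VSC.sum_pow_eq (m : ℕ) (hm : 0 < m) :
    ((∑ k ∈ range p, k ^ m : ℕ) : ZMod p) = if (p - 1) ∣ m then -1 else 0 := by
  rw [VSC.cast_sum_pow]
  classical
  let φ : (ZMod p)ˣ ↪ ZMod p := ⟨fun x => x, Units.val_injective⟩
  have hmap : univ.map φ = univ \ {0} := by
    ext x
    simp only [mem_map, mem_univ, Function.Embedding.coeFn_mk, true_and, mem_sdiff,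
      mem_singleton, φ]
    exact isUnit_iff_ne_zero
  have h1 : ∑ x : ZMod p, x ^ m = ∑ x : (ZMod p)ˣ, ((x : ZMod p)) ^ m := by
    calc ∑ x : ZMod p, x ^ m = ∑ x ∈ univ \ {(0 : ZMod p)}, x ^ m := by
          rw [← sum_sdiff (subset_univ {(0 : ZMod p)}), sum_singleton, zero_pow hm.ne', add_zero]
      _ = ∑ x : (ZMod p)ˣ, ((x : ZMod p)) ^ m := by
          rw [← hmap, Finset.sum_map]
          rfl
  rw [h1]
  have := FiniteField.sum_pow_units (ZMod p) m
  rwa [ZMod.card p] at this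

theorem VSC.dvd_sum_pow_iff (m : ℕ) (hm : 0 < m) :
    p ∣ (∑ k ∈ range p, k ^ m) ↔ ¬ (p - 1) ∣ m := by
  rw [← ZMod.natCast_eq_zero_iff, VSC.sum_pow_eq m hm]
  split_ifs with h
  · simp only [h, not_true, iff_false]
    exact neg_ne_zero.mpr (one_ne_zero : (1 : ZMod p) ≠ 0)
  · simp [h]

theorem VSC.pB_cong (m : ℕ) (hm : Even m) :
    padicNorm p ((p : ℚ) * bernoulli m - ∑ k ∈ range p, (k : ℚ) ^ m) ≤ (p : ℚ)⁻¹ := by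
  have hp1 : (1 : ℚ) < p := by exact_mod_cast hp.out.one_lt
  have hp0 : (0 : ℚ) < p := lt_trans zero_lt_one hp1
  have hrec := VSC.bernoulli_recurrence p m
  have heq : (p : ℚ) * bernoulli m - ∑ k ∈ range p, (k : ℚ) ^ m
      = -∑ i ∈ range m, bernoulli i * ((m + 1).choose i) * (p : ℚ) ^ (m + 1 - i) / (m + 1) := by
    rw [hrec]; ring
  rw [heq, padicNorm.neg]
  refine padicNorm.sum_le' (fun i hi => ?_) (by positivity)
  rw [mem_range] at hi
  by_cases hcase : p = 2 ∧ i = m - 1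
  · obtain ⟨hpe, hie⟩ := hcase
    have hm1 : 1 ≤ m := by omega
    have e1 : m - i = 1 := by omega
    have e2 : m + 1 - i = 2 := by omega
    have hch : m.choose i = m := by
      rw [hie, Nat.choose_symm hm1, Nat.choose_one_right]
    rw [VSC.term_eq m i hi, padicNorm.div, padicNorm.mul, padicNorm.mul, e1, e2, hch]
    have hnp : padicNorm p ((2 : ℚ)) = (p:ℚ)⁻¹ := by
      subst hpe
      have h := padicNorm.padicNorm_p_of_prime (p := 2)
      have h2 : ((2:ℕ):ℚ) = (2:ℚ) := by norm_num
      rw [h2] at h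
      exact h
    have hn2 : padicNorm p ((p:ℚ) ^ 1) = (p:ℚ)⁻¹ := by
      rw [pow_one]
      exact padicNorm.padicNorm_p_of_prime
    rw [hn2]
    push_cast
    rw [hnp]
    skip
    have hNm : padicNorm p ((m : ℚ)) ≤ (p:ℚ)⁻¹ := by
      have hdvd : (p : ℤ) ^ 1 ∣ (m : ℤ) := by
        rw [pow_one, hpe]
        exact_mod_cast hm.two_dvd
      have := (padicNorm.dvd_iff_norm_le (p := p) (n := 1) (z := (m : ℤ))).1
        (by exact_mod_cast hdvd)
      push_cast at this
      simpa [zpow_neg_one] using this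
    have hNB : padicNorm p ((p:ℚ) * bernoulli i) ≤ 1 := VSC.pB_int i
    have hpos : (0:ℚ) < (p:ℚ)⁻¹ := by positivity
    rw [div_le_iff₀ hpos]
    calc padicNorm p ((m:ℚ)) * padicNorm p ((p:ℚ) * bernoulli i) * (p:ℚ)⁻¹
        ≤ (p:ℚ)⁻¹ * 1 * (p:ℚ)⁻¹ := by
          apply mul_le_mul_of_nonneg_right _ (le_of_lt hpos)
          exact mul_le_mul hNm hNB (padicNorm.nonneg _) (le_of_lt hpos)
      _ = (p:ℚ)⁻¹ * (p:ℚ)⁻¹ := by ring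
  · have hj2 : 2 ≤ m + 1 - i := by omega
    have hne : ¬ (p = 2 ∧ m + 1 - i = 2) := by
      intro ⟨h1, h2⟩
      exact hcase ⟨h1, by omega⟩
    have hgt := VSC.aux_pow_gt hp.out.two_le hj2 hne
    have hc : ¬ p ^ (m - i) ∣ (m + 1 - i) := by
      intro hdvd
      have := Nat.le_of_dvd (by omega) hdvd
      have he' : m + 1 - i - 1 = m - i := by omega
      rw [he'] at hgt
      omega
    have := VSC.term_bound hi (VSC.pB_int i) hc
    have he2 : ((m - i : ℕ) : ℤ) - 1 - ((m - i : ℕ) : ℤ) = -1 := by omega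
    rw [he2, zpow_neg_one] at this
    exact_mod_cast this


theorem VSC.dvd_den_iff_aux {n : ℕ} (hn : 0 < n) (he : Even n) :
    p ∣ (bernoulli n).den ↔ (p - 1) ∣ n := by
  have hp1 : (1 : ℚ) < p := by exact_mod_cast hp.out.one_lt
  have hp0 : (0 : ℚ) < p := lt_trans zero_lt_one hp1
  have hSc : ((∑ k ∈ range p, k ^ n : ℕ) : ℚ) = ∑ k ∈ range p, (k : ℚ) ^ n := by push_cast; rfl
  have hdiff : padicNorm p ((p : ℚ) * bernoulli n - ((∑ k ∈ range p, k ^ n : ℕ) : ℚ))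
      ≤ (p : ℚ)⁻¹ := by
    rw [hSc]; exact VSC.pB_cong n he
  have hmul : padicNorm p ((p : ℚ) * bernoulli n)
      = (p : ℚ)⁻¹ * padicNorm p (bernoulli n) := by
    rw [padicNorm.mul, padicNorm.padicNorm_p_of_prime]
  by_cases hdvd : (p - 1) ∣ n
  · have hS : ¬ p ∣ (∑ k ∈ range p, k ^ n) := fun h => (VSC.dvd_sum_pow_iff n hn).1 h hdvd
    have hnS : padicNorm p ((∑ k ∈ range p, k ^ n : ℕ) : ℚ) = 1 :=
      (padicNorm.nat_eq_one_iff _).2 hS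
    have hne : padicNorm p ((∑ k ∈ range p, k ^ n : ℕ) : ℚ)
        ≠ padicNorm p ((p : ℚ) * bernoulli n - ((∑ k ∈ range p, k ^ n : ℕ) : ℚ)) := by
      rw [hnS]
      intro hcontra
      rw [← hcontra] at hdiff
      have : (p:ℚ)⁻¹ < 1 := by
        rw [inv_lt_one_iff₀]; right; exact hp1
      linarith
    have heq : (p : ℚ) * bernoulli n = ((∑ k ∈ range p, k ^ n : ℕ) : ℚ)
        + ((p : ℚ) * bernoulli n - ((∑ k ∈ range p, k ^ n : ℕ) : ℚ)) := by ring
    have hmax := padicNorm.add_eq_max_of_ne (p := p) hne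
    rw [← heq, hnS] at hmax
    have hval : padicNorm p ((p : ℚ) * bernoulli n) = 1 := by
      rw [hmax]
      have : padicNorm p ((p : ℚ) * bernoulli n - ((∑ k ∈ range p, k ^ n : ℕ) : ℚ)) < 1 := by
        refine lt_of_le_of_lt hdiff ?_
        rw [inv_lt_one_iff₀]; right; exact hp1
      exact max_eq_left this.le
    rw [hmul] at hval
    have hB : padicNorm p (bernoulli n) = p := by
      field_simp at hval
      linarith
    simp only [hdvd, iff_true]
    rw [VSC.den_dvd_iff, hB]
    exact hp1
  · have hS : p ∣ (∑ k ∈ range p, k ^ n) := (VSC.dvd_sum_pow_iff n hn).2 hdvd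
    have hnS : padicNorm p ((∑ k ∈ range p, k ^ n : ℕ) : ℚ) ≤ (p : ℚ)⁻¹ := by
      have h1 : ((p : ℤ)) ^ 1 ∣ ((∑ k ∈ range p, k ^ n : ℕ) : ℤ) := by
        rw [pow_one]; exact_mod_cast hS
      have := (padicNorm.dvd_iff_norm_le (p := p) (n := 1)
        (z := ((∑ k ∈ range p, k ^ n : ℕ) : ℤ))).1 (by exact_mod_cast h1)
      push_cast at this
      simpa [zpow_neg_one] using this
    have heq : (p : ℚ) * bernoulli n = ((∑ k ∈ range p, k ^ n : ℕ) : ℚ)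
        + ((p : ℚ) * bernoulli n - ((∑ k ∈ range p, k ^ n : ℕ) : ℚ)) := by ring
    have hle : padicNorm p ((p : ℚ) * bernoulli n) ≤ (p : ℚ)⁻¹ := by
      rw [heq]
      exact le_trans padicNorm.nonarchimedean (max_le hnS hdiff)
    rw [hmul] at hle
    have hB : padicNorm p (bernoulli n) ≤ 1 := by
      have hpinv : (0:ℚ) < (p:ℚ)⁻¹ := by positivity
      calc padicNorm p (bernoulli n)
          = (p : ℚ) * ((p : ℚ)⁻¹ * padicNorm p (bernoulli n)) := by field_simp
        _ ≤ (p : ℚ) * (p : ℚ)⁻¹ := mul_le_mul_of_nonneg_left hle hp0.le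
        _ = 1 := by field_simp
    simp only [hdvd, iff_false]
    rw [VSC.den_dvd_iff]
    push_neg
    exact hB

end VSC

/-- The denominator of the Bernoulli number B_n, for positive even n, is
the product of all primes p with (p-1) ∣ n (all of which satisfy p ≤ n+1). -/
theorem bernoulli_denom (n : ℕ) (hn : 0 < n) (he : Even n) :
    (bernoulli n).den =
      ∏ p ∈ (Finset.range (n + 2)).filter (fun p => p.Prime ∧ (p - 1) ∣ n), p := by
  have hsq : Squarefree (bernoulli n).den := by
    rw [Nat.squarefree_iff_prime_squarefree]
    intro p hpp
    haveI : Fact p.Prime := ⟨hpp⟩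
    apply VSC.not_sq_dvd_den
    have h1 := VSC.pB_int (p := p) n
    rw [padicNorm.mul, padicNorm.padicNorm_p_of_prime] at h1
    have hp1 : (1 : ℚ) < p := by exact_mod_cast hpp.one_lt
    have hp0 : (0 : ℚ) < p := lt_trans zero_lt_one hp1
    calc padicNorm p (bernoulli n)
        = (p : ℚ) * ((p : ℚ)⁻¹ * padicNorm p (bernoulli n)) := by field_simp
      _ ≤ (p : ℚ) * 1 := mul_le_mul_of_nonneg_left h1 hp0.le
      _ = p := by ring
  have hset : (bernoulli n).den.primeFactors
      = (Finset.range (n + 2)).filter (fun p => p.Prime ∧ (p - 1) ∣ n) := by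
    ext p
    rw [Nat.mem_primeFactors, Finset.mem_filter, Finset.mem_range]
    constructor
    · rintro ⟨hpp, hpd, -⟩
      haveI : Fact p.Prime := ⟨hpp⟩
      have hdv : (p - 1) ∣ n := (VSC.dvd_den_iff_aux hn he).1 hpd
      have h1 : p - 1 ≤ n := Nat.le_of_dvd hn hdv
      have h2 := hpp.two_le
      exact ⟨by omega, hpp, hdv⟩
    · rintro ⟨-, hpp, hdv⟩
      haveI : Fact p.Prime := ⟨hpp⟩
      exact ⟨hpp, (VSC.dvd_den_iff_aux hn he).2 hdv, (bernoulli n).den_nz⟩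
  rw [← hset, Nat.prod_primeFactors_of_squarefree hsq]
end
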